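/- Let (K₁, ν₁) and (K₂, ν₂) be finitely ramified valued fields whose residue fields have the same characteristic p > 0 and which have the same ramification index e, with both valuations normalized so that ν₁(p) = ν₂(p) = 1. Then for all n, m ≥ 1 and every homomorphism of valued hyperfields over p, f : H_n(K₁) → H_m(K₂), one has ν_H(f(α)) = ν_H(α) for every α ∈ H_n(K₁). -/

import Mathlib

open Multiplicative WithZero Filter

noncomputable section

/-- The multiplicative value group `ℚₘ₀` used for normalized valuations:
`expQ q` corresponds to the additive value `q`. -/
abbrev QM0 : Type := WithZero (Multiplicative ℚ)

/-- `expQ q` is the element of `ℚₘ₀` corresponding to the additive value `q`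
(so that `v x = expQ q` means `ν(x) = q` additively). -/
def expQ (q : ℚ) : QM0 := ((Multiplicative.ofAdd (-q) : Multiplicative ℚ) : QM0)

section Hyper

variable {K : Type*} [Field K] {Γ₀ : Type*} [LinearOrderedCommGroupWithZero Γ₀]

/-- `hrel v γ a b` says that `b` belongs to the coset `a·(1+𝔪^γ)`,
where `𝔪^γ = {x : ν(x) > γ}` (multiplicatively: `v x < γ`). -/
def hrel (v : Valuation K Γ₀) (γ : Γ₀) (a b : K) : Prop :=
  ∃ u : K, v (u - 1) < γ ∧ b = a * u

/-- The coset `a·(1+𝔪^γ)` as a subset of `K`. -/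
def coset (v : Valuation K Γ₀) (γ : Γ₀) (a : K) : Set K := {b | hrel v γ a b}

/-- `hsumMem v γ a b c` says `[c] ∈ [a] + [b]` in the valued hyperfield `H_γ(K)`. -/
def hsumMem (v : Valuation K Γ₀) (γ : Γ₀) (a b c : K) : Prop :=
  ∃ x y : K, hrel v γ a x ∧ hrel v γ b y ∧ hrel v γ (x + y) c

/-- The valued hyperfield `H_γ(K) = K/(1+𝔪^γ)`. -/
def Hyp (v : Valuation K Γ₀) (γ : Γ₀) : Type _ := Quot (hrel v γ)

/-- The class `[a]_γ ∈ H_γ(K)`. -/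
def hmk (v : Valuation K Γ₀) (γ : Γ₀) (a : K) : Hyp v γ := Quot.mk _ a

end Hyper

section HypHom

variable {K₁ K₂ : Type*} [Field K₁] [Field K₂]
variable {Γ₁ Γ₂ : Type*} [LinearOrderedCommGroupWithZero Γ₁] [LinearOrderedCommGroupWithZero Γ₂]

/-- A homomorphism of valued hyperfields `H_γ(K₁) → H_δ(K₂)`:
`f([0]) = [0]`, `f([1]) = [1]`, `f` is multiplicative, `f(α + β) ⊆ f(α) + f(β)`
and `ν(α) ≤ ν(β) ↔ ν(f α) ≤ ν(f β)` (stated here multiplicatively). -/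
structure HypHom (v₁ : Valuation K₁ Γ₁) (γ : Γ₁) (v₂ : Valuation K₂ Γ₂) (δ : Γ₂) where
  toFun : Hyp v₁ γ → Hyp v₂ δ
  map_zero' : toFun (hmk v₁ γ 0) = hmk v₂ δ 0
  map_one' : toFun (hmk v₁ γ 1) = hmk v₂ δ 1
  map_mul' : ∀ (a b : K₁) (a' b' : K₂), toFun (hmk v₁ γ a) = hmk v₂ δ a' →
    toFun (hmk v₁ γ b) = hmk v₂ δ b' → toFun (hmk v₁ γ (a * b)) = hmk v₂ δ (a' * b')
  map_hsum' : ∀ (a b c : K₁) (a' b' c' : K₂), toFun (hmk v₁ γ a) = hmk v₂ δ a' →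
    toFun (hmk v₁ γ b) = hmk v₂ δ b' → toFun (hmk v₁ γ c) = hmk v₂ δ c' →
    hsumMem v₁ γ a b c → hsumMem v₂ δ a' b' c'
  val_le_iff' : ∀ (a b : K₁) (a' b' : K₂), toFun (hmk v₁ γ a) = hmk v₂ δ a' →
    toFun (hmk v₁ γ b) = hmk v₂ δ b' → (v₁ a ≤ v₁ b ↔ v₂ a' ≤ v₂ b')

/-- A homomorphism of valued hyperfields is *over `p`* if `f([p]) = [p]`. -/
def HypHom.OverP {v₁ : Valuation K₁ Γ₁} {γ : Γ₁} {v₂ : Valuation K₂ Γ₂} {δ : Γ₂}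
    (p : ℕ) (f : HypHom v₁ γ v₂ δ) : Prop :=
  f.toFun (hmk v₁ γ (p : K₁)) = hmk v₂ δ (p : K₂)

end HypHom

section CDVF

variable (K : Type*) [Field K] [Valued K QM0]

/-- `K` is a complete discrete valued field of mixed characteristic `(0,p)` with
perfect residue field and ramification index `e`, with the valuation normalized so
that `ν(p) = 1` and `ν(K^×) = (1/e)ℤ`.  Perfectness of the residue field is expressed
as surjectivity of the Frobenius on residues. -/
structure IsCompleteDVF (p e : ℕ) : Prop where
  prime : p.Prime
  charZero : CharZero K
  complete : CompleteSpace K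
  epos : 0 < e
  v_p : Valued.v (p : K) = expQ 1
  discrete : ∀ x : K, x ≠ 0 → ∃ k : ℤ, Valued.v x = expQ ((k : ℚ) / e)
  exists_unif : ∃ π : K, Valued.v π = expQ (1 / e)
  perfectResidue : ∀ x : K, Valued.v x ≤ 1 → ∃ y : K, Valued.v y ≤ 1 ∧ Valued.v (x - y ^ p) < 1

/-- The cut-off value for the `n`-th valued hyperfield `H_n(K) = K/(1+𝔪^n)`:
`𝔪^n = {x : ν(x) > (n-1)/e}` when the ramification index is `e` and `ν(p) = 1`. -/
def hnγ (e n : ℕ) : QM0 := expQ (((n : ℚ) - 1) / e)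

/-- The set of Teichmüller representatives: elements of the valuation ring which are
`p^s`-th powers in the valuation ring for every `s`. -/
def Teich (p : ℕ) : Set K :=
  {a | Valued.v a ≤ 1 ∧ ∀ s : ℕ, ∃ b : K, Valued.v b ≤ 1 ∧ b ^ p ^ s = a}

/-- The Witt subring of `K`: the set of (convergent) sums `Σ s_k p^k` with all
`s_k` Teichmüller representatives. -/
def WittPart (p : ℕ) : Set K :=
  {x | ∃ s : ℕ → K, (∀ k, s k ∈ Teich K p) ∧
    Tendsto (fun n => ∑ k ∈ Finset.range n, s k * (p : K) ^ k) atTop (nhds x)}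

end CDVF

/-- The multiplicative value group corresponding to additive real values. -/
abbrev RM0 : Type := WithZero (Multiplicative ℝ)

/-- `expR r` corresponds to the additive value `r ∈ ℝ`. -/
def expR (r : ℝ) : RM0 := ((Multiplicative.ofAdd (-r) : Multiplicative ℝ) : RM0)


section Aux

lemma expR_mul (r s : ℝ) : expR r * expR s = expR (r + s) := by
  rw [expR, expR, expR, ← WithZero.coe_mul, ← ofAdd_add, neg_add]

lemma expR_zero : expR 0 = 1 := by simp [expR]

lemma expR_ne_zero (r : ℝ) : expR r ≠ 0 := WithZero.coe_ne_zero

lemma expR_le_expR {r s : ℝ} : expR r ≤ expR s ↔ s ≤ r := by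
  rw [expR, expR, WithZero.coe_le_coe, Multiplicative.ofAdd_le]
  exact neg_le_neg_iff

lemma expR_inj {r s : ℝ} : expR r = expR s ↔ r = s := by
  constructor
  · intro h
    have h1 := expR_le_expR.mp h.le
    have h2 := expR_le_expR.mp h.ge
    linarith
  · rintro rfl; rfl

lemma expR_lt_expR {r s : ℝ} : expR r < expR s ↔ s < r := by
  rw [lt_iff_le_and_ne, lt_iff_le_and_ne, expR_le_expR]
  simp [expR_inj, ne_comm, and_comm, eq_comm]

lemma exists_expR {x : RM0} (hx : x ≠ 0) : ∃ t : ℝ, x = expR t := by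
  obtain ⟨u, rfl⟩ := WithZero.ne_zero_iff_exists.mp hx
  exact ⟨-Multiplicative.toAdd u, by simp [expR]⟩

lemma expR_pow (r : ℝ) (j : ℕ) : expR r ^ j = expR (j * r) := by
  induction j with
  | zero => simp [expR_zero]
  | succ k ih =>
    rw [pow_succ, ih, expR_mul, expR_inj]
    push_cast; ring



lemma grp_lemma (G : AddSubgroup ℝ) (h1 : (1:ℝ) ∈ G) {e : ℕ} (he : 0 < e)
    (hfin : ((G : Set ℝ) ∩ Set.Ioc 0 1).Finite)
    (hcard : ((G : Set ℝ) ∩ Set.Ioc 0 1).ncard = e) :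
    (1 : ℝ) / e ∈ G ∧ ∀ r ∈ G, ∃ k : ℤ, r = k / e := by
  set S := ((G : Set ℝ) ∩ Set.Ioc 0 1) with hSdef
  have h1S : (1:ℝ) ∈ S := ⟨h1, by norm_num, le_refl 1⟩
  have hne : hfin.toFinset.Nonempty := ⟨1, hfin.mem_toFinset.mpr h1S⟩
  set c := hfin.toFinset.min' hne with hcdef
  have hcS : c ∈ S := hfin.mem_toFinset.mp (hfin.toFinset.min'_mem hne)
  obtain ⟨hcG, hc0, hc1⟩ : c ∈ G ∧ 0 < c ∧ c ≤ 1 := ⟨hcS.1, hcS.2.1, hcS.2.2⟩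
  have hmin : ∀ s ∈ S, c ≤ s := fun s hs => hfin.toFinset.min'_le s (hfin.mem_toFinset.mpr hs)
  have least : ∀ g ∈ G, 0 < g → c ≤ g := by
    intro g hg hg0
    by_cases hg1 : g ≤ 1
    · exact hmin g ⟨hg, hg0, hg1⟩
    · linarith
  have key : ∀ r ∈ G, ∃ k : ℤ, r = k * c := by
    intro r hr
    refine ⟨⌊r / c⌋, ?_⟩
    set d := r - ⌊r / c⌋ * c with hddef
    have hdG : d ∈ G := by
      have : (⌊r / c⌋ : ℤ) • c ∈ G := AddSubgroup.zsmul_mem G hcG _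
      rw [zsmul_eq_mul] at this
      exact G.sub_mem hr this
    have hd_eq : d = Int.fract (r / c) * c := by
      rw [Int.fract]
      field_simp [hddef]
      ring
    have hd0 : 0 ≤ d := by
      rw [hd_eq]; exact mul_nonneg (Int.fract_nonneg _) hc0.le
    have hdc : d < c := by
      rw [hd_eq]
      calc Int.fract (r / c) * c < 1 * c := by
            exact mul_lt_mul_of_pos_right (Int.fract_lt_one _) hc0
        _ = c := one_mul c
    rcases hd0.eq_or_lt with h | h
    · linarith [hddef ▸ h.symm]
    · exact absurd (least d hdG h) (not_le.mpr hdc)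
  obtain ⟨M, hM⟩ := key 1 h1
  have hM0 : (0:ℝ) < M := by
    by_contra h
    push_neg at h
    nlinarith
  have hM1 : 1 ≤ M := by exact_mod_cast hM0
  have Scount : S = (fun k : ℤ => (k:ℝ) * c) '' (Set.Icc 1 M) := by
    ext s
    constructor
    · rintro ⟨hsG, hs0, hs1⟩
      obtain ⟨k, rfl⟩ := key s hsG
      refine ⟨k, ⟨?_, ?_⟩, rfl⟩
      · have : (0:ℝ) < k := by nlinarith
        exact_mod_cast this
      · have : (k:ℝ) * c ≤ (M:ℝ) * c := by linarith [hM]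
        have := le_of_mul_le_mul_right this hc0
        exact_mod_cast this
    · rintro ⟨k, ⟨hk1, hkM⟩, rfl⟩
      have hk1' : (1:ℝ) ≤ (k:ℝ) := by exact_mod_cast hk1
      have hkM' : (k:ℝ) ≤ (M:ℝ) := by exact_mod_cast hkM
      refine ⟨?_, ?_, ?_⟩
      · have : (k : ℤ) • c ∈ G := AddSubgroup.zsmul_mem G hcG _
        rwa [zsmul_eq_mul] at this
      · show (0:ℝ) < (k:ℝ) * c
        nlinarith
      · show (k:ℝ) * c ≤ 1
        nlinarith
  have hinj : Function.Injective (fun k : ℤ => (k:ℝ) * c) := by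
    intro x y h
    simp only at h
    have : (x:ℝ) = y := mul_right_cancel₀ hc0.ne' h
    exact_mod_cast this
  have hcnt : S.ncard = M.toNat := by
    rw [Scount, Set.ncard_image_of_injective _ hinj, ← Finset.coe_Icc,
      Set.ncard_coe_finset, Int.card_Icc]
    simp
  have hMe : (M:ℝ) = e := by
    have : M.toNat = e := by rw [← hcnt, hcard]
    have : (M.toNat : ℤ) = e := by exact_mod_cast this
    rw [Int.toNat_of_nonneg (by exact_mod_cast hM0.le)] at this
    exact_mod_cast this
  have hce : c = 1 / e := by
    have he' : (0:ℝ) < e := by exact_mod_cast he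
    field_simp
    nlinarith [hM, hMe]
  constructor
  · rwa [hce] at hcG
  · intro r hr
    obtain ⟨k, rfl⟩ := key r hr
    exact ⟨k, by rw [hce]; ring⟩


lemma expR_inv (r : ℝ) : (expR r)⁻¹ = expR (-r) := by
  rw [expR, expR, ← WithZero.coe_inv, WithZero.coe_inj, neg_neg, ofAdd_neg, inv_inv]

lemma hmk_val_eq {K : Type*} [Field K] (v : Valuation K RM0) {γ : RM0} (hγ : γ ≤ 1)
    {a b : K} (h : hmk v γ a = hmk v γ b) : v a = v b := by
  have key : ∀ a b : K, hrel v γ a b → v a = v b := by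
    rintro a b ⟨u, hu, rfl⟩
    have hu1 : v u = 1 := by
      have h1 : v (u - 1) < 1 := lt_of_lt_of_le hu hγ
      have := Valuation.map_one_add_of_lt v h1
      rwa [add_sub_cancel] at this
    rw [v.map_mul, hu1, mul_one]
  exact congrArg (Quot.lift v key) h

end Aux

/-- Let `(K₁, ν₁)` and `(K₂, ν₂)` be finitely ramified valued fields
whose residue fields have the same characteristic `p > 0` and which have the same
ramification index `e`, with both valuations normalized (`Γ ⊆ ℝ`, `ν(p) = 1`), so that
the set of values in `(0, 1]` has exactly `e` elements.  Then for all `n, m ≥ 1` and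
every homomorphism of valued hyperfields over `p`, `f : H_n(K₁) → H_m(K₂)`, we have
`ν_H(f α) = ν_H(α)` for every `α ∈ H_n(K₁)`. -/
theorem statement13 {K₁ K₂ : Type*} [Field K₁] [Field K₂]
    (v₁ : Valuation K₁ RM0) (v₂ : Valuation K₂ RM0) (p e n m : ℕ)
    (hp : p.Prime) (he : 0 < e) (hn : 1 ≤ n) (hm : 1 ≤ m)
    -- normalization ν(p) = 1:
    (hv₁p : v₁ (p : K₁) = expR 1) (hv₂p : v₂ (p : K₂) = expR 1)
    -- finitely ramified with ramification index e (the set {γ ∈ Γ : 0 < γ ≤ ν(p)}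
    -- has exactly e elements):
    (hfin₁ : {g : RM0 | (∃ x : K₁, x ≠ 0 ∧ v₁ x = g) ∧ expR 1 ≤ g ∧ g < 1}.Finite)
    (hcard₁ : {g : RM0 | (∃ x : K₁, x ≠ 0 ∧ v₁ x = g) ∧ expR 1 ≤ g ∧ g < 1}.ncard = e)
    (hfin₂ : {g : RM0 | (∃ x : K₂, x ≠ 0 ∧ v₂ x = g) ∧ expR 1 ≤ g ∧ g < 1}.Finite)
    (hcard₂ : {g : RM0 | (∃ x : K₂, x ≠ 0 ∧ v₂ x = g) ∧ expR 1 ≤ g ∧ g < 1}.ncard = e)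
    (f : HypHom v₁ (expR (((n : ℝ) - 1) / e)) v₂ (expR (((m : ℝ) - 1) / e)))
    (hf : f.OverP p) :
    ∀ (a : K₁) (a' : K₂),
      f.toFun (hmk v₁ (expR (((n : ℝ) - 1) / e)) a) = hmk v₂ (expR (((m : ℝ) - 1) / e)) a' →
      v₂ a' = v₁ a := by
  intro a a' ha
  revert ha
  revert hf
  revert f
  set γ₁ : RM0 := expR (((n : ℝ) - 1) / e) with hγ₁def
  set γ₂ : RM0 := expR (((m : ℝ) - 1) / e) with hγ₂def
  intro f hf ha
  have he' : (0:ℝ) < e := by exact_mod_cast he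
  have hγ₁le : γ₁ ≤ 1 := by
    rw [hγ₁def, ← expR_zero, expR_le_expR]
    have : (1:ℝ) ≤ n := by exact_mod_cast hn
    exact div_nonneg (by linarith) he'.le
  have hγ₂le : γ₂ ≤ 1 := by
    rw [hγ₂def, ← expR_zero, expR_le_expR]
    have : (1:ℝ) ≤ m := by exact_mod_cast hm
    exact div_nonneg (by linarith) he'.le
  -- equal v₁-valuations transfer to equal v₂-valuations
  have veq : ∀ (x y : K₁) (x' y' : K₂), f.toFun (hmk v₁ γ₁ x) = hmk v₂ γ₂ x' →
      f.toFun (hmk v₁ γ₁ y) = hmk v₂ γ₂ y' → v₁ x = v₁ y → v₂ x' = v₂ y' := by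
    intro x y x' y' hx hy hxy
    exact le_antisymm ((f.val_le_iff' x y x' y' hx hy).mp hxy.le)
      ((f.val_le_iff' y x y' x' hy hx).mp hxy.ge)
  -- every class in H(K₂) has a representative
  have rep : ∀ x : K₁, ∃ x' : K₂, f.toFun (hmk v₁ γ₁ x) = hmk v₂ γ₂ x' := by
    intro x
    obtain ⟨b, hb⟩ := Quot.exists_rep (f.toFun (hmk v₁ γ₁ x))
    exact ⟨b, hb.symm⟩
  -- powers map to powers
  have powmap : ∀ (x : K₁) (x' : K₂), f.toFun (hmk v₁ γ₁ x) = hmk v₂ γ₂ x' →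
      ∀ j : ℕ, f.toFun (hmk v₁ γ₁ (x ^ j)) = hmk v₂ γ₂ (x' ^ j) := by
    intro x x' hx j
    induction j with
    | zero => simpa using f.map_one'
    | succ k ih =>
      rw [pow_succ, pow_succ]
      exact f.map_mul' (x ^ k) x (x' ^ k) x' ih hx
  by_cases ha0 : a = 0
  · subst ha0
    have h0 : v₂ a' = v₂ 0 := hmk_val_eq v₂ hγ₂le ((f.map_zero').symm.trans ha).symm
    rw [h0]; simp
  · -- the value group of K₁
    set G₁ : AddSubgroup ℝ :=
      { carrier := {r : ℝ | ∃ x : K₁, x ≠ 0 ∧ v₁ x = expR r}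
        zero_mem' := ⟨1, one_ne_zero, by rw [map_one, expR_zero]⟩
        add_mem' := by
          rintro r s ⟨x, hx, hvx⟩ ⟨y, hy, hvy⟩
          exact ⟨x * y, mul_ne_zero hx hy, by rw [map_mul, hvx, hvy, expR_mul]⟩
        neg_mem' := by
          rintro r ⟨x, hx, hvx⟩
          refine ⟨x⁻¹, inv_ne_zero hx, ?_⟩
          rw [map_inv₀, hvx, expR_inv] } with hG₁def
    have h1G₁ : (1:ℝ) ∈ G₁ := ⟨(p : K₁), by
      intro h; rw [h, map_zero] at hv₁p; exact expR_ne_zero 1 hv₁p.symm, hv₁p⟩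
    -- translate the finite ramification hypothesis
    have hset : {g : RM0 | (∃ x : K₁, x ≠ 0 ∧ v₁ x = g) ∧ expR 1 ≤ g ∧ g < 1}
        = expR '' ((G₁ : Set ℝ) ∩ Set.Ioc 0 1) := by
      ext g
      constructor
      · rintro ⟨hxg, hg1, hg2⟩
        have hgne : g ≠ 0 := by
          intro h
          rw [h, le_zero_iff] at hg1
          exact expR_ne_zero 1 hg1
        obtain ⟨t, rfl⟩ := exists_expR hgne
        refine ⟨t, ⟨hxg, ?_, ?_⟩, rfl⟩
        · rw [← expR_zero, expR_lt_expR] at hg2; exact hg2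
        · exact expR_le_expR.mp hg1
      · rintro ⟨t, ⟨hxg, ht0, ht1⟩, rfl⟩
        exact ⟨hxg, expR_le_expR.mpr ht1, by rw [← expR_zero, expR_lt_expR]; exact ht0⟩
    have hexpinj : Function.Injective expR := fun _ _ h => expR_inj.mp h
    have hfin' : ((G₁ : Set ℝ) ∩ Set.Ioc 0 1).Finite := by
      rw [hset] at hfin₁
      exact Set.Finite.of_finite_image hfin₁ (hexpinj.injOn)
    have hcard' : ((G₁ : Set ℝ) ∩ Set.Ioc 0 1).ncard = e := by
      rw [hset, Set.ncard_image_of_injective _ hexpinj] at hcard₁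
      exact hcard₁
    obtain ⟨hceG, hallk⟩ := grp_lemma G₁ h1G₁ he hfin' hcard'
    -- a uniformizer π of value 1/e
    obtain ⟨π, hπ0, hπv⟩ := hceG
    obtain ⟨π', hπ'⟩ := rep π
    have hπ'0 : π' ≠ 0 := by
      intro h
      subst h
      have := (f.val_le_iff' π 0 0 0 hπ' f.map_zero').mpr (by rw [map_zero])
      rw [map_zero, le_zero_iff, hπv] at this
      exact expR_ne_zero _ this
    obtain ⟨t, ht⟩ := exists_expR (fun h => hπ'0 (v₂.zero_iff.mp h))
    -- compute t = 1/e using f([p]) = [p]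
    have hte : t = 1 / e := by
      have h1 : v₁ (π ^ e) = v₁ ((p : K₁)) := by
        rw [map_pow, hπv, expR_pow, hv₁p, expR_inj]
        field_simp
      have h2 : v₂ (π' ^ e) = v₂ ((p : K₂)) := veq (π ^ e) (p : K₁) (π' ^ e) (p : K₂)
        (powmap π π' hπ' e) hf h1
      rw [map_pow, ht, expR_pow, hv₂p, expR_inj] at h2
      field_simp at h2 ⊢
      linarith
    -- the value of a is k/e for some integer k
    have haG : ∃ k : ℤ, v₁ a = expR ((k : ℝ) / e) := by
      have hva0 : v₁ a ≠ 0 := fun h => ha0 (v₁.zero_iff.mp h)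
      obtain ⟨r, hr⟩ := exists_expR hva0
      obtain ⟨k, hk⟩ := hallk r ⟨a, ha0, hr⟩
      exact ⟨k, by rw [hr, hk]⟩
    obtain ⟨k, hk⟩ := haG
    -- shift by a power of π to reduce to natural exponents
    set j : ℕ := k.natAbs with hjdef
    set N : ℕ := (k + j).toNat with hNdef
    have hNk : (N : ℤ) = k + j := by
      rw [hNdef]
      exact Int.toNat_of_nonneg (by omega)
    have hNk' : (N : ℝ) = (k : ℝ) + (j : ℝ) := by exact_mod_cast congrArg (Int.cast : ℤ → ℝ) hNk
    have hmul : f.toFun (hmk v₁ γ₁ (a * π ^ j)) = hmk v₂ γ₂ (a' * π' ^ j) :=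
      f.map_mul' a (π ^ j) a' (π' ^ j) ha (powmap π π' hπ' j)
    have hv1 : v₁ (a * π ^ j) = v₁ (π ^ N) := by
      rw [map_mul, map_pow, map_pow, hk, hπv, expR_pow, expR_pow, expR_mul, expR_inj, hNk']
      field_simp
    have hv2 : v₂ (a' * π' ^ j) = v₂ (π' ^ N) :=
      veq (a * π ^ j) (π ^ N) (a' * π' ^ j) (π' ^ N) hmul (powmap π π' hπ' N) hv1
    rw [map_mul, map_pow, map_pow, ht, hte, expR_pow, expR_pow] at hv2
    have hcancel : v₂ a' = expR ((N : ℝ) * (1 / e)) * (expR ((j : ℝ) * (1 / e)))⁻¹ :=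
      (eq_mul_inv_iff_mul_eq₀ (expR_ne_zero _)).mpr hv2
    have hfinal : expR ((N : ℝ) * (1 / e)) * (expR ((j : ℝ) * (1 / e)))⁻¹
        = expR ((k : ℝ) / e) := by
      rw [expR_inv, expR_mul, expR_inj, hNk']
      field_simp
      ring
    rw [hcancel, hfinal, hk]
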